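/- Assume the ensemble setup. Then for all n, k ≥ 1: μ_{k,p}^{(n)} = 0 whenever p > ⌊k/2⌋ + 1, and consequently the k-th expected spectral moment satisfies m̄_k^{(n)} = ∑_{p=1}^{⌊k/2⌋+1} μ_{k,p}^{(n)}. -/

import Mathlib

open MeasureTheory ProbabilityTheory Filter

/-- The random matrix `A_n` with entries `a i j / √n` (indices in `{1,…,n}`). -/
noncomputable def matA {Ω : Type} (a : ℕ → ℕ → Ω → ℝ) (n : ℕ) (ω : Ω) :
    Matrix (Fin n) (Fin n) ℝ :=
  Matrix.of fun u v => a (u.1 + 1) (v.1 + 1) ω / Real.sqrt n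

/-- The `k`-th spectral moment `m_k^{(n)} = (1/n)·trace(A_n^k)`. -/
noncomputable def specMom {Ω : Type} (a : ℕ → ℕ → Ω → ℝ) (n k : ℕ) (ω : Ω) : ℝ :=
  (1 / (n : ℝ)) * Matrix.trace ((matA a n ω) ^ k)

/-- The `k`-th expected spectral moment `m̄_k^{(n)} = E[m_k^{(n)}]`. -/
noncomputable def expSpecMom {Ω : Type} [MeasurableSpace Ω] (P : Measure Ω)
    (a : ℕ → ℕ → Ω → ℝ) (n k : ℕ) : ℝ :=
  ∫ ω, specMom a n k ω ∂P

/-- `σ̂_n = max_{1 ≤ i ≤ n} σ i`. -/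
noncomputable def sigHat (σ : ℕ → ℝ) (n : ℕ) : ℝ := sSup (σ '' Set.Icc 1 n)

/-- `σ̌_n = min_{1 ≤ i ≤ n} σ i`. -/
noncomputable def sigCheck (σ : ℕ → ℝ) (n : ℕ) : ℝ := sInf (σ '' Set.Icc 1 n)

/-- Number of times the closed walk `w : ZMod k → Fin n` traverses the unordered edge `e`. -/
noncomputable def edgeCount (k n : ℕ) (e : Sym2 (Fin n)) (w : ZMod k → Fin n) : ℕ :=
  Nat.card {j : ZMod k // s(w j, w (j + 1)) = e}

/-- Closed walks of length `k` on `Fin n` visiting exactly `p` distinct vertices. -/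
def Wset (k n p : ℕ) : Set (ZMod k → Fin n) := {w | Nat.card (Set.range w) = p}

/-- Walks in `Wset k n p` that traverse each of their edges at least twice. -/
def WhatSet (k n p : ℕ) : Set (ZMod k → Fin n) :=
  {w ∈ Wset k n p | ∀ e : Sym2 (Fin n), 1 ≤ edgeCount k n e w → 2 ≤ edgeCount k n e w}

open Classical in
/-- `μ_{k,p}^{(n)} = n^{−(k/2+1)} ∑_{w ∈ W_{k,p}} E[∏_j a_{w(j) w(j+1)}]`. -/
noncomputable def muW {Ω : Type} [MeasurableSpace Ω] (P : Measure Ω)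
    (a : ℕ → ℕ → Ω → ℝ) (k p n : ℕ) (hk : k ≠ 0) : ℝ :=
  haveI : NeZero k := ⟨hk⟩
  (n : ℝ) ^ (-((k : ℝ) / 2 + 1)) *
    ∑ w : ZMod k → Fin n,
      if w ∈ Wset k n p then
        ∫ ω, ∏ j : ZMod k, a ((w j).1 + 1) ((w (j + 1)).1 + 1) ω ∂P
      else 0

private lemma pow_apply_walk {n : ℕ} (A : Matrix (Fin n) (Fin n) ℝ) :
    ∀ (k : ℕ) (i j : Fin n), (A ^ k) i j =
      ∑ f : Fin k → Fin n,
        (∏ t : Fin k, A ((Fin.cons i f : Fin (k+1) → Fin n) t.castSucc) (f t)) *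
          (if (Fin.cons i f : Fin (k+1) → Fin n) (Fin.last k) = j then 1 else 0) := by
  intro k
  induction k with
  | zero =>
    intro i j
    simp [Matrix.one_apply]
  | succ k ih =>
    intro i j
    rw [pow_succ', Matrix.mul_apply]
    simp_rw [ih]
    rw [← (Fin.consEquiv (fun _ : Fin (k+1) => Fin n)).sum_comp]
    rw [Fintype.sum_prod_type]
    congr 1
    ext x
    rw [Finset.mul_sum]
    congr 1
    ext g
    rw [Fin.prod_univ_succ]
    simp only [Fin.castSucc_zero, Fin.cons_zero, Fin.cons_succ, ← Fin.succ_castSucc,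
      ← Fin.succ_last, Fin.consEquiv_apply]
    ring

private lemma zmod_val_cast (m : ℕ) (j : ZMod (m+1)) : ((j.val : ℕ) : ZMod (m+1)) = j :=
  ZMod.natCast_rightInverse j

private def walkEquiv (n m : ℕ) : (ZMod (m+1) → Fin n) ≃ (Fin (m+1) → Fin n) where
  toFun w := fun t : Fin (m+1) => w (((t.1 + 1 : ℕ)) : ZMod (m+1))
  invFun f := fun j : ZMod (m+1) => f ⟨(j - 1).val, ZMod.val_lt _⟩
  left_inv w := by
    funext j
    have : ((((j : ZMod (m+1)) - 1).val + 1 : ℕ) : ZMod (m+1)) = j := by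
      push_cast [zmod_val_cast]; ring
    exact congrArg w this
  right_inv f := by
    funext t
    have h3 : (((t.1 + 1 : ℕ) : ZMod (m+1)) - 1) = ((t.1 : ℕ) : ZMod (m+1)) := by
      push_cast; ring
    have : (⟨((((t.1 + 1 : ℕ) : ZMod (m+1)) - 1)).val, ZMod.val_lt _⟩ : Fin (m+1)) = t := by
      apply Fin.ext
      show (_ : ZMod (m+1)).val = t.1
      rw [h3]
      exact ZMod.val_natCast_of_lt t.2
    exact congrArg f this

private def finZModEquiv (m : ℕ) : Fin (m+1) ≃ ZMod (m+1) where
  toFun t := ((t.1 : ℕ) : ZMod (m+1))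
  invFun j := ⟨j.val, ZMod.val_lt _⟩
  left_inv t := Fin.ext (ZMod.val_natCast_of_lt t.2)
  right_inv j := zmod_val_cast m j

private lemma trace_pow_walk {n m : ℕ} (A : Matrix (Fin n) (Fin n) ℝ) :
    Matrix.trace (A ^ (m + 1)) =
      ∑ w : ZMod (m + 1) → Fin n, ∏ j : ZMod (m + 1), A (w j) (w (j + 1)) := by
  classical
  rw [Matrix.trace]
  simp only [Matrix.diag, pow_apply_walk A (m+1)]
  rw [Finset.sum_comm]
  have hind : ∀ (f : Fin (m+1) → Fin n),
      ∑ i : Fin n, (∏ t : Fin (m+1), A ((Fin.cons i f : Fin (m+2) → Fin n) t.castSucc) (f t)) *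
          (if (Fin.cons i f : Fin (m+2) → Fin n) (Fin.last (m+1)) = i then 1 else 0)
      = ∏ t : Fin (m+1),
          A ((Fin.cons (f (Fin.last m)) f : Fin (m+2) → Fin n) t.castSucc) (f t) := by
    intro f
    have hlast : ∀ i : Fin n, (Fin.cons i f : Fin (m+2) → Fin n) (Fin.last (m+1)) =
        f (Fin.last m) := by
      intro i
      rw [← Fin.succ_last, Fin.cons_succ]
    simp only [hlast, mul_ite, mul_one, mul_zero]
    rw [Finset.sum_ite_eq]
    simp
  simp only [hind]
  refine (Fintype.sum_equiv (walkEquiv n m) (fun w => ∏ j : ZMod (m+1), A (w j) (w (j + 1)))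
    _ ?_).symm
  intro w
  refine (Fintype.prod_equiv (finZModEquiv m) _ (fun j => A (w j) (w (j + 1))) ?_).symm
  intro t
  have h2 : (walkEquiv n m w) t = w (((t.1 : ℕ) : ZMod (m+1)) + 1) := by
    show w _ = _
    congr 1
    push_cast
    ring
  have h1 : (Fin.cons ((walkEquiv n m w) (Fin.last m)) (walkEquiv n m w) : Fin (m+2) → Fin n)
      t.castSucc = w ((t.1 : ℕ) : ZMod (m+1)) := by
    induction t using Fin.cases with
    | zero =>
      show (walkEquiv n m w) (Fin.last m) = _
      show w _ = _
      congr 1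
      simp
    | succ s =>
      rw [← Fin.succ_castSucc, Fin.cons_succ]
      show w _ = _
      congr 1
  show A _ ((walkEquiv n m w) t) = _
  rw [h1, h2]
  rfl

private def edgePair {n : ℕ} : Sym2 (Fin n) → ℕ × ℕ :=
  Sym2.lift ⟨fun u v => (min u.1 v.1 + 1, max u.1 v.1 + 1), fun u v => by
    simp [min_comm, max_comm]⟩

private lemma edgePair_prop {n : ℕ} (e : Sym2 (Fin n)) :
    1 ≤ (edgePair e).1 ∧ (edgePair e).1 ≤ (edgePair e).2 := by
  induction e using Sym2.ind with
  | _ u v =>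
    refine ⟨Nat.succ_le_succ (Nat.zero_le _), ?_⟩
    simp only [edgePair, Sym2.lift_mk]
    exact Nat.succ_le_succ (min_le_max)

private lemma edgePair_injective {n : ℕ} : Function.Injective (edgePair (n := n)) := by
  intro e e' h
  induction e using Sym2.ind with
  | _ u v =>
    induction e' using Sym2.ind with
    | _ u' v' =>
      simp only [edgePair, Sym2.lift_mk, Prod.mk.injEq] at h
      obtain ⟨h1, h2⟩ := h
      rw [Sym2.eq_iff]
      rcases Nat.le_total u.1 v.1 with hc | hc <;> rcases Nat.le_total u'.1 v'.1 with hc' | hc' <;>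
        [left; right; right; left] <;> constructor <;> apply Fin.ext <;> omega

private lemma a_edgePair {Ω : Type} (a : ℕ → ℕ → Ω → ℝ) (hsymm : ∀ i j, a i j = a j i)
    {n : ℕ} (u v : Fin n) :
    a (u.1 + 1) (v.1 + 1) = a (edgePair s(u,v)).1 (edgePair s(u,v)).2 := by
  simp only [edgePair, Sym2.lift_mk]
  rcases le_total u.1 v.1 with hc | hc
  · rw [min_eq_left hc, max_eq_right hc]
  · rw [min_eq_right hc, max_eq_left hc, hsymm]

private lemma natCard_range_eq {n m : ℕ} (w : ZMod (m+1) → Fin n) :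
    Nat.card (Set.range w) = (Finset.image w Finset.univ).card := by
  rw [← Set.image_univ, ← Finset.coe_univ, ← Finset.coe_image, Nat.card_coe_set_eq,
    Set.ncard_coe_finset]

private lemma card_image_walk {n m : ℕ} (w : ZMod (m+1) → Fin n) :
    (Finset.image w Finset.univ).card ≤
      (Finset.image (fun j : ZMod (m+1) => s(w j, w (j+1))) Finset.univ).card + 1 := by
  classical
  set V := Finset.image w Finset.univ with hV
  set E := Finset.image (fun j : ZMod (m+1) => s(w j, w (j+1))) Finset.univ with hE
  have hw0 : w 0 ∈ V := Finset.mem_image_of_mem w (Finset.mem_univ _)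
  have hVne : 1 ≤ V.card := Finset.card_pos.mpr ⟨w 0, hw0⟩
  have key : (V.erase (w 0)).card ≤ E.card := by
    have hex : ∀ v, v ∈ V.erase (w 0) → ∃ t : ℕ, w ((t : ℕ) : ZMod (m+1)) = v := by
      intro v hv
      obtain ⟨j, _, hj⟩ := Finset.mem_image.mp (Finset.mem_of_mem_erase hv)
      exact ⟨j.val, by rw [zmod_val_cast]; exact hj⟩
    set φ : Fin n → Sym2 (Fin n) := fun v =>
      if h : ∃ t : ℕ, w ((t : ℕ) : ZMod (m+1)) = v then
        s(w (((Nat.find h - 1 : ℕ)) : ZMod (m+1)), w ((Nat.find h : ℕ) : ZMod (m+1)))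
      else s(w 0, w 0) with hφ
    have hpos : ∀ v (hv : v ∈ V.erase (w 0)), 1 ≤ Nat.find (hex v hv) := by
      intro v hv
      rcases Nat.eq_zero_or_pos (Nat.find (hex v hv)) with h0 | h0
      · exfalso
        have := Nat.find_spec (hex v hv)
        rw [h0] at this
        simp only [Nat.cast_zero] at this
        exact (Finset.ne_of_mem_erase hv) this.symm
      · exact h0
    have hφv : ∀ v (hv : v ∈ V.erase (w 0)), φ v =
        s(w (((Nat.find (hex v hv) - 1 : ℕ)) : ZMod (m+1)),
          w ((Nat.find (hex v hv) : ℕ) : ZMod (m+1))) := by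
      intro v hv
      rw [hφ]
      simp only [dif_pos (hex v hv)]
    apply Finset.card_le_card_of_injOn φ
    · intro v hv
      rw [hφv v hv]
      have harith : (((Nat.find (hex v hv) - 1 : ℕ)) : ZMod (m+1)) + 1
          = ((Nat.find (hex v hv) : ℕ) : ZMod (m+1)) := by
        have h1 := hpos v hv
        have : (Nat.find (hex v hv) - 1) + 1 = Nat.find (hex v hv) := by omega
        rw [← this]
        push_cast
        ring
      rw [hE]
      refine Finset.mem_image.mpr ⟨((Nat.find (hex v hv) - 1 : ℕ) : ZMod (m+1)),
        Finset.mem_univ _, ?_⟩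
      rw [harith]
    · intro v hv v' hv' heq
      by_contra hne
      simp only [Finset.mem_coe] at hv hv'
      rw [hφv v hv, hφv v' hv'] at heq
      rw [Sym2.eq_iff] at heq
      have hsv := Nat.find_spec (hex v hv)
      have hsv' := Nat.find_spec (hex v' hv')
      rcases heq with ⟨_, hb⟩ | ⟨ha, hb⟩
      · exact hne (hsv ▸ hsv' ▸ hb)
      ·
        rcases Nat.le_total (Nat.find (hex v hv)) (Nat.find (hex v' hv')) with hle | hle
        · have hlt : Nat.find (hex v hv) - 1 < Nat.find (hex v' hv') := by
            have := hpos v hv; omega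
          exact Nat.find_min (hex v' hv') hlt (ha.trans hsv')
        · have hlt : Nat.find (hex v' hv') - 1 < Nat.find (hex v hv) := by
            have := hpos v' hv'; omega
          exact Nat.find_min (hex v hv) hlt (hb.symm.trans hsv)
  have := Finset.card_erase_of_mem hw0
  omega

private lemma integrable_pow_a {Ω : Type} [MeasurableSpace Ω] (P : Measure Ω)
    [IsProbabilityMeasure P] (K : ℝ) (a : ℕ → ℕ → Ω → ℝ)
    (hmeas : ∀ i j, Measurable (a i j))
    (hbdd : ∀ i j, 1 ≤ i → 1 ≤ j → ∀ᵐ ω ∂P, |a i j ω| < K)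
    (i j : ℕ) (hi : 1 ≤ i) (hj : 1 ≤ j) (d : ℕ) :
    Integrable (fun ω => a i j ω ^ d) P := by
  refine (integrable_const (K ^ d)).mono'
    (((hmeas i j).pow_const d).aestronglyMeasurable) ?_
  filter_upwards [hbdd i j hi hj] with ω hω
  rw [Real.norm_eq_abs, abs_pow]
  exact pow_le_pow_left₀ (abs_nonneg _) hω.le d

private lemma vanish {Ω : Type} [MeasurableSpace Ω] (P : Measure Ω) [IsProbabilityMeasure P]
    (K : ℝ) (a : ℕ → ℕ → Ω → ℝ)
    (hmeas : ∀ i j, Measurable (a i j))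
    (hsymm : ∀ i j, a i j = a j i)
    (hindep : iIndepFun
      (fun q : {q : ℕ × ℕ // 1 ≤ q.1 ∧ q.1 ≤ q.2} => a q.1.1 q.1.2) P)
    (hmean : ∀ i j, 1 ≤ i → 1 ≤ j → ∫ ω, a i j ω ∂P = 0)
    (hbdd : ∀ i j, 1 ≤ i → 1 ≤ j → ∀ᵐ ω ∂P, |a i j ω| < K)
    {n m : ℕ} (w : ZMod (m+1) → Fin n)
    (hp : (m+1) / 2 + 1 < Nat.card (Set.range w)) :
    ∫ ω, ∏ j : ZMod (m+1), a ((w j).1 + 1) ((w (j+1)).1 + 1) ω ∂P = 0 := by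
  classical
  set E := Finset.image (fun j : ZMod (m+1) => s(w j, w (j+1))) Finset.univ with hE
  -- fiber decomposition of the index set
  have hcardsum : (Finset.univ : Finset (ZMod (m+1))).card =
      ∑ e ∈ E, (Finset.univ.filter (fun j : ZMod (m+1) => s(w j, w (j+1)) = e)).card :=
    Finset.card_eq_sum_card_fiberwise (fun j _ => Finset.mem_image_of_mem _ (Finset.mem_univ j))
  have hunivcard : (Finset.univ : Finset (ZMod (m+1))).card = m + 1 := by
    rw [Finset.card_univ, ZMod.card]
  -- there is an edge traversed exactly once
  have he0 : ∃ e0 ∈ E, (Finset.univ.filter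
      (fun j : ZMod (m+1) => s(w j, w (j+1)) = e0)).card = 1 := by
    by_contra hcon
    push_neg at hcon
    have h2le : ∀ e ∈ E, 2 ≤ (Finset.univ.filter
        (fun j : ZMod (m+1) => s(w j, w (j+1)) = e)).card := by
      intro e he
      obtain ⟨j, _, hj⟩ := Finset.mem_image.mp he
      have h1 : 0 < (Finset.univ.filter
          (fun j : ZMod (m+1) => s(w j, w (j+1)) = e)).card :=
        Finset.card_pos.mpr ⟨j, Finset.mem_filter.mpr ⟨Finset.mem_univ _, hj⟩⟩
      have := hcon e he
      omega
    have hsum : 2 * E.card ≤ m + 1 := by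
      rw [← hunivcard, hcardsum]
      calc 2 * E.card = ∑ _e ∈ E, 2 := by rw [Finset.sum_const]; ring
      _ ≤ _ := Finset.sum_le_sum h2le
    have h1 := card_image_walk w
    rw [natCard_range_eq] at hp
    rw [← hE] at h1
    omega
  obtain ⟨e0, he0E, he0⟩ := he0
  -- set up the independent family
  set ι := {q : ℕ × ℕ // 1 ≤ q.1 ∧ q.1 ≤ q.2} with hι
  set cnt : ι → ℕ := fun q => (Finset.univ.filter
    (fun j : ZMod (m+1) => edgePair s(w j, w (j+1)) = q.1)).card with hcnt
  set h : ι → Ω → ℝ := fun q ω => a q.1.1 q.1.2 ω ^ cnt q with hh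
  have hh_meas : ∀ q : ι, Measurable (h q) := fun q => (hmeas _ _).pow_const _
  have hh_indep : iIndepFun h P := by
    have := hindep.comp (fun (q : ι) (x : ℝ) => x ^ cnt q)
      (fun q => measurable_id.pow_const _)
    exact this
  set q0 : ι := ⟨edgePair e0, edgePair_prop e0⟩ with hq0
  set Q : Finset ι := E.image (fun e => (⟨edgePair e, edgePair_prop e⟩ : ι)) with hQ
  have hq0Q : q0 ∈ Q := Finset.mem_image_of_mem _ he0E
  -- pointwise product identity
  have hprod : ∀ ω, ∏ j : ZMod (m+1), a ((w j).1 + 1) ((w (j+1)).1 + 1) ω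
      = ∏ q ∈ Q, h q ω := by
    intro ω
    rw [← Finset.prod_fiberwise_of_maps_to
      (g := fun j : ZMod (m+1) => (⟨edgePair s(w j, w (j+1)), edgePair_prop _⟩ : ι))
      (t := Q) (fun j _ => Finset.mem_image_of_mem _ (Finset.mem_image_of_mem _ (Finset.mem_univ j)))]
    refine Finset.prod_congr rfl ?_
    intro q hq
    have : ∀ j ∈ Finset.univ.filter
        (fun j : ZMod (m+1) => (⟨edgePair s(w j, w (j+1)), edgePair_prop _⟩ : ι) = q),
        a ((w j).1 + 1) ((w (j+1)).1 + 1) ω = a q.1.1 q.1.2 ω := by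
      intro j hj
      have hj' := (Finset.mem_filter.mp hj).2
      have : edgePair s(w j, w (j+1)) = q.1 := congrArg Subtype.val hj'
      have h2 := a_edgePair a hsymm (w j) (w (j+1))
      rw [this] at h2
      exact congrFun h2 ω
    rw [Finset.prod_congr rfl this, Finset.prod_const]
    have hcard : (Finset.univ.filter
        (fun j : ZMod (m+1) => (⟨edgePair s(w j, w (j+1)), edgePair_prop _⟩ : ι) = q)).card
        = cnt q := by
      rw [hcnt]
      congr 1
      ext j
      simp only [Finset.mem_filter, Finset.mem_univ, true_and]
      constructor
      · intro hj; exact congrArg Subtype.val hj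
      · intro hj; exact Subtype.ext hj
    rw [hcard, hh]
  -- cnt q0 = 1
  have hcnt_q0 : cnt q0 = 1 := by
    rw [← he0]
    show (Finset.univ.filter
      (fun j : ZMod (m+1) => edgePair s(w j, w (j+1)) = edgePair e0)).card = _
    congr 1
    ext j
    simp only [Finset.mem_filter, Finset.mem_univ, true_and]
    constructor
    · intro hj; exact edgePair_injective hj
    · intro hj; rw [hj]
  -- independence of h q0 from the rest
  have hI : IndepFun (h q0) (fun ω => ∏ q ∈ Q.erase q0, h q ω) P := by
    have := hh_indep.indepFun_finsetProd_of_notMem hh_meas (Finset.notMem_erase q0 Q)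
    have heq : (∏ q ∈ Q.erase q0, h q) = fun ω => ∏ q ∈ Q.erase q0, h q ω := by
      funext ω; rw [Finset.prod_apply]
    rw [heq] at this
    exact this.symm
  -- integrability
  have hint1 : Integrable (h q0) P := by
    rw [hh]
    exact integrable_pow_a P K a hmeas hbdd _ _ q0.2.1 (q0.2.1.trans q0.2.2) _
  have hint2 : Integrable (fun ω => ∏ q ∈ Q.erase q0, h q ω) P := by
    refine (integrable_const (∏ q ∈ Q.erase q0, K ^ cnt q)).mono'
      (Finset.measurable_prod _ (fun q _ => hh_meas q)).aestronglyMeasurable ?_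
    have hae : ∀ᵐ ω ∂P, ∀ q ∈ Q.erase q0, |a q.1.1 q.1.2 ω| < K := by
      rw [Filter.eventually_all_finset]
      intro q _
      exact hbdd _ _ q.2.1 (q.2.1.trans q.2.2)
    filter_upwards [hae] with ω hω
    rw [Real.norm_eq_abs, Finset.abs_prod]
    refine Finset.prod_le_prod (fun q _ => abs_nonneg _) ?_
    intro q hq
    rw [hh]
    simp only
    rw [abs_pow]
    exact pow_le_pow_left₀ (abs_nonneg _) (hω q hq).le _
  -- compute
  calc ∫ ω, ∏ j : ZMod (m+1), a ((w j).1 + 1) ((w (j+1)).1 + 1) ω ∂P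
      = ∫ ω, h q0 ω * ∏ q ∈ Q.erase q0, h q ω ∂P := by
        refine integral_congr_ae (Eventually.of_forall (fun ω => ?_))
        show (∏ j : ZMod (m+1), a ((w j).1 + 1) ((w (j+1)).1 + 1) ω)
          = h q0 ω * ∏ q ∈ Q.erase q0, h q ω
        rw [hprod ω, Finset.mul_prod_erase Q (fun q => h q ω) hq0Q]
    _ = (∫ ω, h q0 ω ∂P) * ∫ ω, ∏ q ∈ Q.erase q0, h q ω ∂P :=
        hI.integral_mul_eq_mul_integral hint1.aestronglyMeasurable hint2.aestronglyMeasurable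
    _ = 0 := by
        have : ∫ ω, h q0 ω ∂P = 0 := by
          rw [hh]
          simp only [hcnt_q0, pow_one]
          exact hmean _ _ q0.2.1 (q0.2.1.trans q0.2.2)
        rw [this, zero_mul]

/-- **Only dominant exponents contribute**: `μ_{k,p} = 0` for `p > ⌊k/2⌋ + 1`, hence
`m̄_k^{(n)} = ∑_{p=1}^{⌊k/2⌋+1} μ_{k,p}^{(n)}`. -/
theorem expected_moment_eq_sum_mu {Ω : Type} [MeasurableSpace Ω]
    (P : Measure Ω) [IsProbabilityMeasure P]
    (K : ℝ) (hK : 0 < K)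
    (σ : ℕ → ℝ) (hσpos : ∀ i, 1 ≤ i → 0 < σ i)
    (a : ℕ → ℕ → Ω → ℝ)
    (hmeas : ∀ i j, Measurable (a i j))
    (hsymm : ∀ i j, a i j = a j i)
    (hindep : iIndepFun
      (fun q : {q : ℕ × ℕ // 1 ≤ q.1 ∧ q.1 ≤ q.2} => a q.1.1 q.1.2) P)
    (hmean : ∀ i j, 1 ≤ i → 1 ≤ j → ∫ ω, a i j ω ∂P = 0)
    (hvar : ∀ i j, 1 ≤ i → 1 ≤ j → ∫ ω, (a i j ω) ^ 2 ∂P = σ i * σ j)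
    (hbdd : ∀ i j, 1 ≤ i → 1 ≤ j → ∀ᵐ ω ∂P, |a i j ω| < K)
    (n k : ℕ) (hn : 1 ≤ n) (hk : 1 ≤ k) :
    (∀ p : ℕ, k / 2 + 1 < p → muW P a k p n (by omega) = 0) ∧
    expSpecMom P a n k = ∑ p ∈ Finset.Icc 1 (k / 2 + 1), muW P a k p n (by omega) := by
  classical
  obtain ⟨m, rfl⟩ : ∃ m, k = m + 1 := ⟨k - 1, by omega⟩
  set Tf : (ZMod (m+1) → Fin n) → Ω → ℝ := fun w ω =>
    ∏ j : ZMod (m+1), a ((w j).1 + 1) ((w (j+1)).1 + 1) ω with hTf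
  have hintF : ∀ w : ZMod (m+1) → Fin n, Integrable (Tf w) P := by
    intro w
    refine (integrable_const (K ^ (m+1))).mono'
      (Finset.measurable_prod _ fun j _ => hmeas _ _).aestronglyMeasurable ?_
    have hae : ∀ᵐ ω ∂P, ∀ j ∈ (Finset.univ : Finset (ZMod (m+1))),
        |a ((w j).1 + 1) ((w (j+1)).1 + 1) ω| < K := by
      rw [Filter.eventually_all_finset]
      intro j _
      exact hbdd _ _ (Nat.succ_le_succ (Nat.zero_le _)) (Nat.succ_le_succ (Nat.zero_le _))
    filter_upwards [hae] with ω hω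
    rw [Real.norm_eq_abs, hTf]
    simp only
    rw [Finset.abs_prod]
    calc ∏ j : ZMod (m+1), |a ((w j).1 + 1) ((w (j+1)).1 + 1) ω|
        ≤ ∏ _j : ZMod (m+1), K :=
          Finset.prod_le_prod (fun j _ => abs_nonneg _) (fun j hj => (hω j hj).le)
      _ = K ^ (m+1) := by rw [Finset.prod_const, Finset.card_univ, ZMod.card]
  have part1 : ∀ p : ℕ, (m+1) / 2 + 1 < p → muW P a (m+1) p n (by omega) = 0 := by
    intro p hp
    simp only [muW]
    rw [Finset.sum_eq_zero, mul_zero]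
    intro w _
    split_ifs with hw
    · simp only [Wset, Set.mem_setOf_eq] at hw
      exact vanish P K a hmeas hsymm hindep hmean hbdd w (hw ▸ hp)
    · rfl
  refine ⟨part1, ?_⟩
  -- constants
  set c0 : ℝ := (1 / (n : ℝ)) * (1 / (Real.sqrt n) ^ (m+1)) with hc0
  have hN : (0:ℝ) < n := by exact_mod_cast hn
  have hc : ((n:ℝ)) ^ (-((((m+1:ℕ)):ℝ) / 2 + 1)) = c0 := by
    rw [Real.rpow_neg hN.le, Real.rpow_add hN, Real.rpow_one, hc0,
      Real.sqrt_eq_rpow, ← Real.rpow_natCast ((n:ℝ) ^ ((1:ℝ)/2)) (m+1),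
      ← Real.rpow_mul hN.le, mul_inv]
    push_cast
    rw [one_div, one_div, one_div]
    ring_nf
  -- expectation expansion
  have hspec : ∀ ω, specMom a n (m+1) ω = ∑ w : ZMod (m+1) → Fin n, c0 * Tf w ω := by
    intro ω
    rw [specMom, trace_pow_walk, Finset.mul_sum]
    refine Finset.sum_congr rfl (fun w _ => ?_)
    have hmat : ∏ j : ZMod (m+1), matA a n ω (w j) (w (j+1))
        = Tf w ω / (Real.sqrt n) ^ (m+1) := by
      simp only [matA, Matrix.of_apply, hTf]
      rw [Finset.prod_div_distrib, Finset.prod_const, Finset.card_univ, ZMod.card]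
    rw [hmat, hc0]
    ring
  have hexp : expSpecMom P a n (m+1) = ∑ w : ZMod (m+1) → Fin n, c0 * ∫ ω, Tf w ω ∂P := by
    rw [expSpecMom]
    rw [integral_congr_ae (Eventually.of_forall hspec)]
    rw [integral_finset_sum _ (fun w _ => (hintF w).const_mul c0)]
    exact Finset.sum_congr rfl (fun w _ => integral_const_mul c0 _)
  -- mu rewriting
  have hmu : ∀ p : ℕ, muW P a (m+1) p n (by omega) =
      c0 * ∑ w : ZMod (m+1) → Fin n,
        (if w ∈ Wset (m+1) n p then ∫ ω, Tf w ω ∂P else 0) := by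
    intro p
    simp only [muW]
    rw [hc]
  -- sum over all p in Icc 1 (m+1)
  have hfull : expSpecMom P a n (m+1) =
      ∑ p ∈ Finset.Icc 1 (m+1), muW P a (m+1) p n (by omega) := by
    rw [hexp]
    simp only [hmu]
    rw [← Finset.mul_sum]
    conv_rhs => rw [← Finset.mul_sum]
    congr 1
    rw [Finset.sum_comm]
    refine Finset.sum_congr rfl (fun w _ => ?_)
    symm
    have hmem : Nat.card (Set.range w) ∈ Finset.Icc 1 (m+1) := by
      rw [Finset.mem_Icc]
      constructor
      · have hne : Nonempty (Set.range w) := (Set.range_nonempty w).to_subtype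
        exact Nat.card_pos
      · rw [natCard_range_eq]
        calc (Finset.image w Finset.univ).card ≤ (Finset.univ : Finset (ZMod (m+1))).card :=
              Finset.card_image_le
          _ = m + 1 := by rw [Finset.card_univ, ZMod.card]
    simp only [Wset, Set.mem_setOf_eq]
    refine (Finset.sum_eq_single_of_mem _ hmem
      (fun p _ hne => if_neg (fun hc => hne hc.symm))).trans (if_pos rfl)
  rw [hfull]
  refine (Finset.sum_subset (Finset.Icc_subset_Icc_right (by omega)) ?_).symm
  intro p hp hnp
  rw [Finset.mem_Icc] at hp
  rw [Finset.mem_Icc] at hnp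
  push_neg at hnp
  exact part1 p (by omega)
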